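/- With β = 2 - ζ₉⁴ - ζ₉⁵ and σ the generator of Gal(Q(ζ₉)⁺/Q) with σ(cos(π/9)) = cos(5π/9), the Galois orbit of β is {β, u₁⁻²β, u₂⁻²β}, i.e., σ(β) = u₁⁻²β and σ²(β) = u₂⁻²β. -/
import Mathlib

noncomputable section

/-- `ζ₉ = exp(2πi/9)`. -/
def z9 : ℂ := Complex.exp (2 * Real.pi * Complex.I / 9)

/-- The totally real cubic field `Q(ζ₉)⁺ = Q(2cos(π/9))`, as a subfield of `ℂ`. -/
def Kplus : IntermediateField ℚ ℂ :=
  IntermediateField.adjoin ℚ {((2 * Real.cos (Real.pi / 9) : ℝ) : ℂ)}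

def u1 : ℂ := z9 - z9 ^ 2 - z9 ^ 5

def u2 : ℂ := 1 - z9 ^ 4 - z9 ^ 5

lemma hz : z9 ^ 6 + z9 ^ 3 + 1 = 0 := by
  have h9 : z9 ^ 9 = 1 := by
    rw [z9, ← Complex.exp_nat_mul,
      show ((9:ℕ):ℂ) * (2 * (Real.pi:ℂ) * Complex.I / 9) = 2 * Real.pi * Complex.I by
        push_cast; ring]
    exact Complex.exp_two_pi_mul_I
  have h3 : z9 ^ 3 ≠ 1 := by
    rw [z9, ← Complex.exp_nat_mul]
    intro hone
    rw [Complex.exp_eq_one_iff] at hone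
    obtain ⟨n, hn⟩ := hone
    have h2 : (2 * (Real.pi:ℂ) * Complex.I) ≠ 0 := by
      simp [Real.pi_ne_zero, Complex.I_ne_zero]
    have key : ((3 * n - 1 : ℤ) : ℂ) * (2 * (Real.pi:ℂ) * Complex.I) = 0 := by
      push_cast
      push_cast at hn
      linear_combination (-3 : ℂ) * hn
    rcases mul_eq_zero.1 key with h | h
    · have : (3 * n - 1 : ℤ) = 0 := by exact_mod_cast h
      omega
    · exact h2 h
  rcases mul_eq_zero.1 (show (z9 ^ 3 - 1) * (z9 ^ 6 + z9 ^ 3 + 1) = 0 by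
      linear_combination h9) with h | h
  · exact absurd (sub_eq_zero.1 h) h3
  · exact h

lemma hz4 : z9 ^ 4 = -Complex.exp (-((Real.pi:ℂ) * Complex.I / 9)) := by
  rw [z9, ← Complex.exp_nat_mul,
    show ((4:ℕ):ℂ) * (2 * (Real.pi:ℂ) * Complex.I / 9)
      = (Real.pi:ℂ) * Complex.I + -((Real.pi:ℂ) * Complex.I / 9) by push_cast; ring,
    Complex.exp_add, Complex.exp_pi_mul_I]
  ring

lemma hz5 : z9 ^ 5 = -Complex.exp ((Real.pi:ℂ) * Complex.I / 9) := by
  rw [z9, ← Complex.exp_nat_mul,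
    show ((5:ℕ):ℂ) * (2 * (Real.pi:ℂ) * Complex.I / 9)
      = (Real.pi:ℂ) * Complex.I + (Real.pi:ℂ) * Complex.I / 9 by push_cast; ring,
    Complex.exp_add, Complex.exp_pi_mul_I]
  ring

lemma hz2 : z9 ^ 2 = -Complex.exp (-(5 * (Real.pi:ℂ) * Complex.I / 9)) := by
  rw [z9, ← Complex.exp_nat_mul,
    show ((2:ℕ):ℂ) * (2 * (Real.pi:ℂ) * Complex.I / 9)
      = (Real.pi:ℂ) * Complex.I + -(5 * (Real.pi:ℂ) * Complex.I / 9) by push_cast; ring,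
    Complex.exp_add, Complex.exp_pi_mul_I]
  ring

lemma hz7 : z9 ^ 7 = -Complex.exp (5 * (Real.pi:ℂ) * Complex.I / 9) := by
  rw [z9, ← Complex.exp_nat_mul,
    show ((7:ℕ):ℂ) * (2 * (Real.pi:ℂ) * Complex.I / 9)
      = (Real.pi:ℂ) * Complex.I + 5 * (Real.pi:ℂ) * Complex.I / 9 by push_cast; ring,
    Complex.exp_add, Complex.exp_pi_mul_I]
  ring

lemma cos1 : ((Real.cos (Real.pi / 9) : ℝ) : ℂ) = -(z9 ^ 4 + z9 ^ 5) / 2 := by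
  rw [Complex.ofReal_cos, Complex.cos,
    show ((Real.pi / 9 : ℝ) : ℂ) * Complex.I = (Real.pi:ℂ) * Complex.I / 9 by
      push_cast; ring,
    show -((Real.pi / 9 : ℝ) : ℂ) * Complex.I = -((Real.pi:ℂ) * Complex.I / 9) by
      push_cast; ring,
    hz4, hz5]
  ring

lemma cos5 : ((Real.cos (5 * Real.pi / 9) : ℝ) : ℂ) = -(z9 ^ 2 + z9 ^ 7) / 2 := by
  rw [Complex.ofReal_cos, Complex.cos,
    show ((5 * Real.pi / 9 : ℝ) : ℂ) * Complex.I = 5 * (Real.pi:ℂ) * Complex.I / 9 by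
      push_cast; ring,
    show -((5 * Real.pi / 9 : ℝ) : ℂ) * Complex.I = -(5 * (Real.pi:ℂ) * Complex.I / 9) by
      push_cast; ring,
    hz2, hz7]
  ring

lemma u1_inv : u1 * (1 + z9 - z9 ^ 2 + z9 ^ 4) = 1 := by
  rw [u1]; linear_combination (-1 + z9 - z9 ^ 3) * hz

lemma u2_inv : u2 * (-z9 + z9 ^ 2 - z9 ^ 4) = 1 := by
  rw [u2]; linear_combination (-1 - z9 + z9 ^ 2 + z9 ^ 3) * hz

lemma u1_ne : u1 ≠ 0 := by
  intro h; have := u1_inv; rw [h, zero_mul] at this; exact zero_ne_one this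

lemma u2_ne : u2 ≠ 0 := by
  intro h; have := u2_inv; rw [h, zero_mul] at this; exact zero_ne_one this

/-- For `σ` the generator of `Gal(Q(ζ₉)⁺/Q)` with `σ(cos(π/9)) = cos(5π/9)`:
`σ(β) = u₁⁻²β` and `σ²(β) = u₂⁻²β`, so the Galois orbit of `β` is `{β, u₁⁻²β, u₂⁻²β}`. -/
theorem stmt12 (σ : Kplus ≃ₐ[ℚ] Kplus) (c c5 U1 U2 B : Kplus)
    (hc : (c : ℂ) = ((Real.cos (Real.pi / 9) : ℝ) : ℂ))
    (hc5 : (c5 : ℂ) = ((Real.cos (5 * Real.pi / 9) : ℝ) : ℂ))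
    (hU1 : (U1 : ℂ) = u1) (hU2 : (U2 : ℂ) = u2)
    (hB : (B : ℂ) = 2 - z9 ^ 4 - z9 ^ 5)
    (hσ : σ c = c5) :
    σ B = U1⁻¹ ^ 2 * B ∧ σ (σ B) = U2⁻¹ ^ 2 * B := by
  have hcC : (c : ℂ) = -(z9 ^ 4 + z9 ^ 5) / 2 := by rw [hc, cos1]
  have hc5C : (c5 : ℂ) = -(z9 ^ 2 + z9 ^ 7) / 2 := by rw [hc5, cos5]
  have h2K : ((2 : Kplus) : ℂ) = 2 := rfl
  have hBK : B = 2 + 2 * c := by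
    apply Subtype.coe_injective
    push_cast [h2K]
    rw [hB, hcC]; ring
  have hc5K : c5 = 2 * c ^ 2 - c - 1 := by
    apply Subtype.coe_injective
    push_cast [h2K]
    rw [hc5C, hcC]
    linear_combination (1 - z9 ^ 2 / 2 - z9 ^ 3 - z9 ^ 4 / 2) * hz
  have hU1ne : U1 ≠ 0 := by
    intro h; apply u1_ne; rw [← hU1, h]; simp
  have hU2ne : U2 ≠ 0 := by
    intro h; apply u2_ne; rw [← hU2, h]; simp
  have hσB : σ B = 2 + 2 * c5 := by
    rw [hBK, map_add, map_mul, map_ofNat, hσ]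
  have hσc5 : σ c5 = 2 * c5 ^ 2 - c5 - 1 := by
    conv_lhs => rw [hc5K]
    rw [map_sub, map_sub, map_mul, map_pow, map_one, map_ofNat, hσ]
  constructor
  · rw [hσB]
    apply Subtype.coe_injective
    push_cast [h2K, IntermediateField.coe_inv]
    rw [hU1, hB, hc5C, inv_pow, eq_comm, inv_mul_eq_iff_eq_mul₀ (pow_ne_zero 2 u1_ne), u1]
    linear_combination (2 - 2*z9^2 + 2*z9^3 - 2*z9^4 - z9^5 + z9^6 - 2*z9^7 + z9^8 + z9^11) * hz
  · rw [hσB, map_add, map_mul, map_ofNat, hσc5]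
    apply Subtype.coe_injective
    push_cast [h2K, IntermediateField.coe_inv]
    rw [hU2, hB, hc5C, inv_pow, eq_comm, inv_mul_eq_iff_eq_mul₀ (pow_ne_zero 2 u2_ne), u2]
    linear_combination (2 - z9^2 - 2*z9^3 - 2*z9^4 + 2*z9^6 + 3*z9^7 + 3*z9^8 - 2*z9^10
      - 3*z9^11 - 2*z9^12 + z9^13 + 2*z9^14 + z9^15 - z9^16 - 2*z9^17 - z9^18) * hz
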